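/- Let p > 1 and define h(r) := q(r)^{p'} where 1/p + 1/p' = 1. For a solution v of (q·φ_p(v'))' + q·f(v) = 0 with energy E(r) = |v'(r)|^p/p' + F(v(r)), the function H(r) := h(r)·E(r) satisfies H'(r) = h'(r)·F(v(r)) for all r > 0. In particular, H is nonincreasing whenever F(v(r)) ≤ 0. -/

import Mathlib

open Set Filter MeasureTheory

theorem stmt6 (p p' : ℝ) (hp : 1 < p) (hp' : 1 / p + 1 / p' = 1)
    (f F : ℝ → ℝ) (hF : ∀ s, F s = ∫ t in (0:ℝ)..s, f t)
    (q q' : ℝ → ℝ) (hderiv : ∀ r > 0, HasDerivAt q (q' r) r)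
    (hqpos : ∀ r > 0, 0 < q r) (hq'pos : ∀ r > 0, 0 < q' r)
    (v v' : ℝ → ℝ) (hv : ∀ r, HasDerivAt v (v' r) r)
    (E : ℝ → ℝ) (hE : ∀ r, E r = |v' r| ^ p / p' + F (v r))
    (hE' : ∀ r > 0, HasDerivAt E (-(q' r / q r) * |v' r| ^ p) r) :
    (∀ r > 0, HasDerivAt (fun r => q r ^ p' * E r)
        (p' * q r ^ (p' - 1) * q' r * F (v r)) r) ∧
    (∀ a b : ℝ, 0 < a → a ≤ b → (∀ r ∈ Icc a b, F (v r) ≤ 0) →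
        q b ^ p' * E b ≤ q a ^ p' * E a) := by
  have hp'pos : 0 < p' := by
    have h1 : 0 < 1 / p' := by
      have : 1 / p < 1 := by rw [div_lt_one (by linarith)]; exact hp
      linarith
    exact one_div_pos.mp h1
  have key : ∀ r > 0, HasDerivAt (fun r => q r ^ p' * E r)
      (p' * q r ^ (p' - 1) * q' r * F (v r)) r := by
    intro r hr
    have hq0 : q r ≠ 0 := (hqpos r hr).ne'
    have hQ : HasDerivAt (fun r => q r ^ p') (q' r * p' * q r ^ (p' - 1)) r :=
      (hderiv r hr).rpow_const (Or.inl hq0)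
    have hH : HasDerivAt (fun r => q r ^ p' * E r) _ r := hQ.mul (hE' r hr)
    convert hH using 1
    rw [hE r, Real.rpow_sub_one hq0]
    field_simp
    ring
  refine ⟨key, fun a b ha hab hFle => ?_⟩
  have hsub : Icc a b ⊆ Ioi (0:ℝ) := fun x hx => lt_of_lt_of_le ha hx.1
  have hmono : AntitoneOn (fun r => q r ^ p' * E r) (Icc a b) := by
    apply antitoneOn_of_deriv_nonpos (convex_Icc a b)
    · exact fun x hx => ((key x (hsub hx)).continuousAt).continuousWithinAt
    · intro x hx
      rw [interior_Icc] at hx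
      exact ((key x (hsub (Ioo_subset_Icc_self hx))).differentiableAt).differentiableWithinAt
    · intro x hx
      rw [interior_Icc] at hx
      have hx' := hsub (Ioo_subset_Icc_self hx)
      rw [(key x hx').deriv]
      have h1 : F (v x) ≤ 0 := hFle x (Ioo_subset_Icc_self hx)
      have h2 : (0:ℝ) < q x ^ (p' - 1) := Real.rpow_pos_of_pos (hqpos x hx') _
      have h3 := hq'pos x hx'
      exact mul_nonpos_of_nonneg_of_nonpos (by positivity) h1
  exact hmono (left_mem_Icc.mpr hab) (right_mem_Icc.mpr hab) hab
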